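/- For functions F, G, H in the Schwartz class on ℝ and any ε > 0, one has |∫_ℝ F·G·H dt| ≤ C(ε)·‖F‖_{H^{1/2+ε}}·‖G‖_{H^{1/2+ε}}·‖H‖_{H^{-1/4+ε}}. -/

import Mathlib

open MeasureTheory FourierTransform

noncomputable def sobNorm1 (σ : ℝ) (F : ℝ → ℂ) : ℝ :=
  (∫ τ : ℝ, Real.sqrt (1 + τ ^ 2) ^ (2 * σ) * ‖𝓕 F τ‖ ^ 2) ^ ((1:ℝ)/2)

namespace Stmt9Proof
open Real Complex SchwartzMap
open scoped ENNReal NNReal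
noncomputable section


/-- the japanese bracket -/
def brk (τ : ℝ) : ℝ := Real.sqrt (1 + τ ^ 2)

lemma brk_pos (τ : ℝ) : 0 < brk τ := Real.sqrt_pos.2 (by positivity)

lemma one_le_brk (τ : ℝ) : 1 ≤ brk τ := by
  have h := Real.sqrt_le_sqrt (show (1:ℝ) ≤ 1 + τ ^ 2 by nlinarith [sq_nonneg τ])
  simpa [brk] using h

lemma two_rpow_le {p : ℝ} (hp1 : p ≤ 1) : (2:ℝ) ^ p ≤ 2 := by
  have h : (2:ℝ) ^ p ≤ 2 ^ (1:ℝ) := Real.rpow_le_rpow_of_exponent_le (by norm_num) hp1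
  simpa using h

lemma brk_neg (τ : ℝ) : brk (-τ) = brk τ := by simp [brk]

lemma brk_rpow_pos (r τ : ℝ) : 0 < brk τ ^ r := Real.rpow_pos_of_pos (brk_pos τ) r

lemma brk_rpow_nonneg (r τ : ℝ) : 0 ≤ brk τ ^ r := (brk_rpow_pos r τ).le

lemma brk_rpow_add (r s τ : ℝ) : brk τ ^ (r + s) = brk τ ^ r * brk τ ^ s :=
  Real.rpow_add (brk_pos τ) r s

lemma brk_rpow_le_one {r : ℝ} (hr : r ≤ 0) (τ : ℝ) : brk τ ^ r ≤ 1 :=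
  Real.rpow_le_one_of_one_le_of_nonpos (one_le_brk τ) hr

lemma brk_rpow_le_rpow {r s : ℝ} (h : r ≤ s) (τ : ℝ) : brk τ ^ r ≤ brk τ ^ s :=
  Real.rpow_le_rpow_of_exponent_le (one_le_brk τ) h

lemma brk_add_le (ξ η : ℝ) : brk (ξ + η) ≤ brk ξ + brk η := by
  have h1 : 0 ≤ brk ξ := (brk_pos ξ).le
  have h2 : 0 ≤ brk η := (brk_pos η).le
  have e1 : brk ξ ^ 2 = 1 + ξ ^ 2 := Real.sq_sqrt (by positivity)
  have e2 : brk η ^ 2 = 1 + η ^ 2 := Real.sq_sqrt (by positivity)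
  have hx : |ξ| ≤ brk ξ := by
    rw [← Real.sqrt_sq_eq_abs]; exact Real.sqrt_le_sqrt (by nlinarith)
  have hy : |η| ≤ brk η := by
    rw [← Real.sqrt_sq_eq_abs]; exact Real.sqrt_le_sqrt (by nlinarith)
  rw [brk, show (1:ℝ) + (ξ+η)^2 = (brk ξ + brk η)^2 - (2 * (brk ξ * brk η - ξ*η) + 1) by nlinarith]
  calc Real.sqrt ((brk ξ + brk η)^2 - (2 * (brk ξ * brk η - ξ*η) + 1))
      ≤ Real.sqrt ((brk ξ + brk η)^2) := by
        apply Real.sqrt_le_sqrt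
        have : ξ * η ≤ brk ξ * brk η := by
          calc ξ * η ≤ |ξ * η| := le_abs_self _
          _ = |ξ| * |η| := abs_mul ξ η
          _ ≤ brk ξ * brk η := by apply mul_le_mul hx hy (abs_nonneg _) h1
        nlinarith
    _ = brk ξ + brk η := Real.sqrt_sq (by positivity)

/-- subadditivity of the bracket to a power `p ∈ [0,1]` -/
lemma brk_rpow_add_le {p : ℝ} (hp0 : 0 ≤ p) (hp1 : p ≤ 1) (ξ η : ℝ) :
    brk (ξ + η) ^ p ≤ 2 * (brk ξ ^ p + brk η ^ p) := by
  have key : ∀ x y : ℝ, brk x ≤ brk y →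
      brk (x + y) ^ p ≤ 2 * (brk x ^ p + brk y ^ p) := by
    intro x y h
    have h1 : brk (x + y) ^ p ≤ (2 * brk y) ^ p := by
      apply Real.rpow_le_rpow (brk_pos _).le _ hp0
      have := brk_add_le x y; linarith
    have h2 : (2 * brk y) ^ p = 2 ^ p * brk y ^ p := Real.mul_rpow (by norm_num) (brk_pos _).le
    have h3 : (2:ℝ) ^ p * brk y ^ p ≤ 2 * brk y ^ p :=
      mul_le_mul_of_nonneg_right (two_rpow_le hp1) (brk_rpow_nonneg p y)
    nlinarith [brk_rpow_nonneg p x, brk_rpow_nonneg p y]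
  rcases le_total (brk ξ) (brk η) with h | h
  · exact key ξ η h
  · have := key η ξ h
    rw [add_comm η ξ] at this; linarith

lemma continuous_brk : Continuous brk := by
  apply Real.continuous_sqrt.comp; continuity

lemma continuous_brk_rpow (r : ℝ) : Continuous (fun τ => brk τ ^ r) :=
  continuous_brk.rpow_const (fun τ => Or.inl (brk_pos τ).ne')

/-- integrability of negative powers of the bracket -/
lemma integrable_brk_rpow {r : ℝ} (hr : 1 < r) :
    Integrable (fun τ : ℝ => brk τ ^ (-r)) := by
  have h := integrable_rpow_neg_one_add_norm_sq (E := ℝ) (μ := volume) (r := r) (by simpa)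
  have : (fun x : ℝ => ((1:ℝ) + ‖x‖ ^ 2) ^ (-r / 2)) = fun τ : ℝ => brk τ ^ (-r) := by
    ext τ
    rw [Real.norm_eq_abs, _root_.sq_abs, brk, Real.sqrt_eq_rpow, ← Real.rpow_mul (by positivity)]
    congr 1
    ring
  rwa [this] at h





/-- ENNReal weight -/
def W (r τ : ℝ) : ℝ≥0∞ := ENNReal.ofReal (brk τ ^ r)

def Iconst (ε : ℝ) : ℝ := ∫ τ : ℝ, brk τ ^ (-(1 + 2*ε))

lemma norm_le_bound (φ : 𝓢(ℝ, ℂ)) : ∃ M : ℝ, 0 ≤ M ∧ ∀ x, ‖φ x‖ ≤ M := by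
  obtain ⟨C, hC⟩ := φ.decay 0 0
  refine ⟨C, hC.1.le, fun x => ?_⟩
  have := hC.2 x; simpa using this

lemma integrable_brk_mul_sq (r : ℝ) (φ : 𝓢(ℝ, ℂ)) :
    Integrable (fun τ => brk τ ^ r * ‖φ τ‖ ^ 2) := by
  obtain ⟨n, hn⟩ := exists_nat_ge r
  obtain ⟨M, hM0, hM⟩ := norm_le_bound φ
  have hbound : ∀ τ : ℝ, brk τ ^ r * ‖φ τ‖ ^ 2 ≤
      2 ^ n * M * (‖φ τ‖ + ‖τ‖ ^ (2 * n) * ‖φ τ‖) := by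
    intro τ
    have h1 : brk τ ^ r ≤ brk τ ^ (n : ℝ) := brk_rpow_le_rpow hn τ
    have h2 : brk τ ^ (n : ℝ) = brk τ ^ n := Real.rpow_natCast _ n
    have h3 : brk τ ≤ 1 + τ ^ 2 := by
      have : Real.sqrt (1 + τ^2) ≤ Real.sqrt ((1 + τ^2)^2) :=
        Real.sqrt_le_sqrt (by nlinarith [sq_nonneg τ, sq_nonneg (τ^2)])
      rwa [Real.sqrt_sq (by positivity)] at this
    have h4 : brk τ ^ n ≤ (1 + τ ^ 2) ^ n := pow_le_pow_left₀ (brk_pos τ).le h3 n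
    have h5 : (1 + τ ^ 2) ^ n ≤ 2 ^ n * (1 + (τ ^ 2) ^ n) := by
      rcases le_total (τ ^ 2) 1 with h | h
      · calc (1 + τ ^ 2) ^ n ≤ 2 ^ n := pow_le_pow_left₀ (by positivity) (by linarith) n
          _ ≤ 2 ^ n * (1 + (τ^2)^n) := by nlinarith [pow_nonneg (sq_nonneg τ) n, pow_pos (show (0:ℝ) < 2 by norm_num) n]
      · calc (1 + τ ^ 2) ^ n ≤ (2 * τ ^ 2) ^ n := pow_le_pow_left₀ (by positivity) (by linarith) n
          _ = 2 ^ n * (τ ^ 2) ^ n := mul_pow 2 (τ^2) n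
          _ ≤ 2 ^ n * (1 + (τ^2)^n) := by nlinarith [pow_pos (show (0:ℝ) < 2 by norm_num) n]
    have hsq : ‖φ τ‖ ^ 2 ≤ M * ‖φ τ‖ := by
      have := hM τ; nlinarith [norm_nonneg (φ τ)]
    have hnormpow : ‖τ‖ ^ (2 * n) = (τ ^ 2) ^ n := by
      rw [Real.norm_eq_abs, pow_mul, _root_.sq_abs]
    have hb : brk τ ^ r ≤ 2 ^ n * (1 + (τ ^ 2) ^ n) := by
      calc brk τ ^ r ≤ brk τ ^ (n:ℝ) := h1
        _ = brk τ ^ n := h2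
        _ ≤ (1 + τ^2)^n := h4
        _ ≤ _ := h5
    calc brk τ ^ r * ‖φ τ‖ ^ 2 ≤ (2 ^ n * (1 + (τ ^ 2) ^ n)) * ‖φ τ‖ ^ 2 :=
          mul_le_mul_of_nonneg_right hb (by positivity)
      _ = 2 ^ n * (‖φ τ‖ ^ 2 + (τ^2)^n * ‖φ τ‖ ^ 2) := by ring
      _ ≤ 2 ^ n * (M * ‖φ τ‖ + (τ^2)^n * (M * ‖φ τ‖)) := by
          have h6 : (τ^2)^n * ‖φ τ‖^2 ≤ (τ^2)^n * (M * ‖φ τ‖) :=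
            mul_le_mul_of_nonneg_left hsq (pow_nonneg (sq_nonneg τ) n)
          have h7 : (0:ℝ) < 2 ^ n := pow_pos (by norm_num) n
          nlinarith
      _ = 2 ^ n * M * (‖φ τ‖ + ‖τ‖ ^ (2*n) * ‖φ τ‖) := by rw [hnormpow]; ring
  have hgint : Integrable (fun τ : ℝ => 2 ^ n * M * (‖φ τ‖ + ‖τ‖ ^ (2 * n) * ‖φ τ‖)) := by
    apply Integrable.const_mul
    exact φ.integrable.norm.add (φ.integrable_pow_mul volume (2*n))
  apply hgint.mono' (((continuous_brk_rpow r).mul (φ.continuous.norm.pow 2)).aestronglyMeasurable)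
  filter_upwards with τ
  simp only [Pi.mul_apply, Pi.pow_apply]
  rw [Real.norm_eq_abs, _root_.abs_of_nonneg (mul_nonneg (brk_rpow_nonneg r τ) (by positivity))]
  exact hbound τ




/-- the phase `e^{2πiu}` -/
def ph (u : ℝ) : ℂ := Complex.exp ((2 * π * u : ℝ) * Complex.I)

lemma ph_norm (u : ℝ) : ‖ph u‖ = 1 := by
  rw [ph, Complex.norm_exp_ofReal_mul_I]

lemma int_congr {α : Type*} [MeasurableSpace α] {μ : Measure α} {f g : α → ℂ}
    (h : ∀ x, f x = g x) : ∫ x, f x ∂μ = ∫ x, g x ∂μ :=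
  integral_congr_ae (Filter.Eventually.of_forall h)

lemma ph_mul (a b : ℝ) : ph a * ph b = ph (a + b) := by
  rw [ph, ph, ph, ← Complex.exp_add]
  congr 1
  push_cast
  ring

lemma ph_zero : ph 0 = 1 := by simp [ph]

lemma continuous_ph : Continuous ph := by
  apply Complex.continuous_exp.comp
  continuity

lemma fourier_integrable (P : 𝓢(ℝ, ℂ)) : Integrable (𝓕 (⇑P)) := by
  have := (fourierTransformCLM ℂ P).integrable (μ := volume)
  rwa [fourierTransformCLM_apply] at this

lemma fourier_continuous (P : 𝓢(ℝ, ℂ)) : Continuous (𝓕 (⇑P)) := by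
  have := (fourierTransformCLM ℂ P).continuous
  rwa [fourierTransformCLM_apply] at this

lemma inversion (P : 𝓢(ℝ, ℂ)) (t : ℝ) :
    P t = ∫ ξ : ℝ, ph (ξ * t) * 𝓕 (⇑P) ξ := by
  have h := Continuous.fourierInv_fourier_eq P.continuous P.integrable (fourier_integrable P)
  have h2 : 𝓕⁻ (𝓕 ⇑P) t = P t := by rw [h]
  rw [← h2, Real.fourierInv_eq']
  apply int_congr (fun ξ => ?_)
  rw [smul_eq_mul, ph]
  congr 2
  simp only [RCLike.inner_apply, starRingEnd_apply, star_trivial]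
  push_cast
  ring

lemma fourier_neg_eq (P : 𝓢(ℝ, ℂ)) (s : ℝ) :
    ∫ t : ℝ, ph (s * t) * P t = 𝓕 (⇑P) (-s) := by
  rw [Real.fourier_eq']
  apply int_congr (fun t => ?_)
  rw [smul_eq_mul, ph]
  congr 2
  simp only [RCLike.inner_apply, starRingEnd_apply, star_trivial]
  push_cast
  ring

lemma expand (P : 𝓢(ℝ, ℂ)) {W : ℝ → ℂ} (hWi : Integrable W) (hWc : Continuous W) (θ : ℝ) :
    ∫ t : ℝ, ph (θ * t) * (P t * W t)
      = ∫ η : ℝ, 𝓕 (⇑P) η * ∫ t : ℝ, ph ((θ + η) * t) * W t := by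
  set Φ := 𝓕 (⇑P) with hΦ
  have hΦi : Integrable Φ := fourier_integrable P
  have hΦc : Continuous Φ := fourier_continuous P
  have hprod : Integrable (Function.uncurry fun t η : ℝ =>
      ph (θ * t) * ((ph (η * t) * Φ η) * W t)) (volume.prod volume) := by
    have hint : Integrable (fun z : ℝ × ℝ => ‖W z.1‖ * ‖Φ z.2‖) (volume.prod volume) :=
      hWi.norm.mul_prod hΦi.norm
    apply hint.mono'
    · apply Continuous.aestronglyMeasurable
      apply (continuous_ph.comp (continuous_const.mul continuous_fst)).mul
      exact ((continuous_ph.comp (continuous_snd.mul continuous_fst)).mul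
        (hΦc.comp continuous_snd)).mul (hWc.comp continuous_fst)
    · filter_upwards with z
      rw [Function.uncurry]
      simp only [norm_mul, ph_norm, one_mul]
      rw [mul_comm ‖Φ z.2‖ ‖W z.1‖]
  calc ∫ t : ℝ, ph (θ * t) * (P t * W t)
      = ∫ t : ℝ, ∫ η : ℝ, ph (θ * t) * ((ph (η * t) * Φ η) * W t) := by
        apply int_congr (fun t => ?_)
        rw [inversion P t, ← hΦ, ← integral_mul_const, ← integral_const_mul]
    _ = ∫ η : ℝ, ∫ t : ℝ, ph (θ * t) * ((ph (η * t) * Φ η) * W t) :=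
        integral_integral_swap hprod
    _ = ∫ η : ℝ, 𝓕 (⇑P) η * ∫ t : ℝ, ph ((θ + η) * t) * W t := by
        apply int_congr (fun η => ?_)
        rw [← hΦ, ← integral_const_mul]
        apply int_congr (fun t => ?_)
        calc ph (θ * t) * ((ph (η * t) * Φ η) * W t)
            = (ph (θ * t) * ph (η * t)) * (Φ η * W t) := by ring
          _ = ph ((θ + η) * t) * (Φ η * W t) := by rw [ph_mul, show θ * t + η * t = (θ + η) * t by ring]
          _ = Φ η * (ph ((θ + η) * t) * W t) := by ring

lemma identity (F G H : 𝓢(ℝ, ℂ)) :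
    ∫ t : ℝ, F t * G t * H t
      = ∫ ξ : ℝ, 𝓕 (⇑F) ξ * ∫ η : ℝ, 𝓕 (⇑G) η * 𝓕 (⇑H) (-(ξ + η)) := by
  have hGH : Integrable (fun t : ℝ => G t * H t) := by
    obtain ⟨C, hC⟩ := G.decay 0 0
    apply H.integrable.bdd_mul (c := C) G.continuous.aestronglyMeasurable
    exact Filter.Eventually.of_forall (fun x => (by have := hC.2 x; simpa using this : ‖G x‖ ≤ C))
  calc ∫ t : ℝ, F t * G t * H t
      = ∫ t : ℝ, ph (0 * t) * (F t * (G t * H t)) := by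
        apply int_congr (fun t => ?_)
        rw [zero_mul, ph_zero, one_mul, mul_assoc]
    _ = ∫ ξ : ℝ, 𝓕 (⇑F) ξ * ∫ t : ℝ, ph ((0 + ξ) * t) * (G t * H t) :=
        expand F hGH (G.continuous.mul H.continuous) 0
    _ = ∫ ξ : ℝ, 𝓕 (⇑F) ξ * ∫ η : ℝ, 𝓕 (⇑G) η * 𝓕 (⇑H) (-(ξ + η)) := by
        apply int_congr (fun ξ => ?_)
        congr 1
        rw [show (0:ℝ) + ξ = ξ by ring]
        rw [expand G H.integrable H.continuous ξ]
        apply int_congr (fun η => ?_)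
        congr 1
        exact fourier_neg_eq H (ξ + η)





/-- ENNReal weight -/


lemma W_lt_top (r τ : ℝ) : W r τ < ⊤ := ENNReal.ofReal_lt_top

lemma W_mul (r s τ : ℝ) : W r τ * W s τ = W (r + s) τ := by
  rw [W, W, W, ← ENNReal.ofReal_mul (brk_rpow_nonneg r τ), brk_rpow_add]

lemma W_le_one {r : ℝ} (hr : r ≤ 0) (τ : ℝ) : W r τ ≤ 1 := by
  rw [W, ← ENNReal.ofReal_one]
  exact ENNReal.ofReal_le_ofReal (brk_rpow_le_one hr τ)

lemma measurable_W (r : ℝ) : Measurable (W r) :=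
  ENNReal.measurable_ofReal.comp (continuous_brk_rpow r).measurable

lemma W_add_le {p : ℝ} (hp0 : 0 ≤ p) (hp1 : p ≤ 1) (ξ η : ℝ) :
    W p (ξ + η) ≤ 2 * (W p ξ + W p η) := by
  rw [W, W, W]
  calc ENNReal.ofReal (brk (ξ + η) ^ p) ≤ ENNReal.ofReal (2 * (brk ξ ^ p + brk η ^ p)) :=
        ENNReal.ofReal_le_ofReal (brk_rpow_add_le hp0 hp1 ξ η)
    _ = 2 * (ENNReal.ofReal (brk ξ ^ p) + ENNReal.ofReal (brk η ^ p)) := by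
        rw [ENNReal.ofReal_mul (by norm_num),
          ENNReal.ofReal_add (brk_rpow_nonneg p ξ) (brk_rpow_nonneg p η)]
        norm_num

lemma conj22 : Real.HolderConjugate 2 2 := Real.HolderConjugate.two_two

/-- Cauchy-Schwarz in `ℝ≥0∞` -/
lemma CS {f g : ℝ → ℝ≥0∞} (hf : Measurable f) (hg : Measurable g) :
    ∫⁻ x, f x * g x ≤ (∫⁻ x, f x ^ (2:ℝ)) ^ ((1:ℝ)/2) * (∫⁻ x, g x ^ (2:ℝ)) ^ ((1:ℝ)/2) :=
  ENNReal.lintegral_mul_le_Lp_mul_Lq volume conj22 hf.aemeasurable hg.aemeasurable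

/-- the `L²` lintegral of the weight `W (-(1/2+ε))` is `ofReal Iε` -/


lemma lintegral_W_sq {ε : ℝ} (hε : 0 < ε) :
    ∫⁻ τ : ℝ, W (-(1/2+ε)) τ ^ (2:ℝ) = ENNReal.ofReal (Iconst ε) := by
  have h1 : ∀ τ : ℝ, W (-(1/2+ε)) τ ^ (2:ℝ) = ENNReal.ofReal (brk τ ^ (-(1 + 2*ε))) := by
    intro τ
    rw [W, ENNReal.ofReal_rpow_of_nonneg (brk_rpow_nonneg _ _) (by norm_num : (0:ℝ) ≤ 2)]
    congr 1
    rw [← Real.rpow_mul (brk_pos τ).le]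
    congr 1
    ring
  simp_rw [h1]
  rw [← ofReal_integral_eq_lintegral_ofReal (integrable_brk_rpow (by linarith))
    (Filter.Eventually.of_forall (fun τ => brk_rpow_nonneg _ τ))]
  rfl

/-- translation invariance for squares -/
lemma lint_shift (h : ℝ → ℝ≥0∞) (η : ℝ) :
    ∫⁻ ξ : ℝ, h (ξ + η) ^ (2:ℝ) = ∫⁻ ξ : ℝ, h ξ ^ (2:ℝ) :=
  lintegral_add_right_eq_self (fun x => h x ^ (2:ℝ)) η

/-- The core trilinear kernel estimate. -/
lemma core {ε : ℝ} (hε : 0 < ε) (hε8 : ε ≤ 1/8)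
    {f g h : ℝ → ℝ≥0∞} (hf : Measurable f) (hg : Measurable g) (hh : Measurable h) :
    (∫⁻ ξ : ℝ, ∫⁻ η : ℝ,
        (W (-(1/2+ε)) ξ * f ξ) * (W (-(1/2+ε)) η * g η) * (W (1/4-ε) (ξ+η) * h (ξ+η)))
      ≤ ENNReal.ofReal (4 * Iconst ε ^ ((1:ℝ)/2)) *
          ((∫⁻ x, f x ^ (2:ℝ)) ^ ((1:ℝ)/2) * (∫⁻ x, g x ^ (2:ℝ)) ^ ((1:ℝ)/2) *
            (∫⁻ x, h x ^ (2:ℝ)) ^ ((1:ℝ)/2)) := by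
  set s : ℝ := 1/2 + ε with hs
  set p : ℝ := 1/4 - ε with hp
  set α : ℝ := -(1/4) - 2*ε with hα
  have hαeq : ∀ τ, W (-s) τ * W p τ = W α τ := by
    intro τ; rw [W_mul]; congr 1; rw [hs, hp, hα]; ring
  set Lf := (∫⁻ x, f x ^ (2:ℝ)) ^ ((1:ℝ)/2) with hLf
  set Lg := (∫⁻ x, g x ^ (2:ℝ)) ^ ((1:ℝ)/2) with hLg
  set Lh := (∫⁻ x, h x ^ (2:ℝ)) ^ ((1:ℝ)/2) with hLh
  set CE := ENNReal.ofReal (Iconst ε ^ ((1:ℝ)/2)) with hCE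
  -- the weight L² bound
  have hWL2 : (∫⁻ τ : ℝ, W (-s) τ ^ (2:ℝ)) ^ ((1:ℝ)/2) = CE := by
    rw [lintegral_W_sq hε, hCE, ← ENNReal.ofReal_rpow_of_nonneg ?_ (by norm_num)]
    · apply integral_nonneg (fun τ => brk_rpow_nonneg _ τ)
  -- measurability package
  have hmf : Measurable (fun ξ => W α ξ * f ξ) := (measurable_W α).mul hf
  have hmf' : Measurable (fun ξ => W (-s) ξ * f ξ) := (measurable_W (-s)).mul hf
  have hmg : Measurable (fun η => W α η * g η) := (measurable_W α).mul hg
  have hmg' : Measurable (fun η => W (-s) η * g η) := (measurable_W (-s)).mul hg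
  -- α ≤ 0 hence W α ≤ 1
  have hα0 : α ≤ 0 := by rw [hα]; linarith
  have hWα : ∀ τ, W α τ ≤ 1 := W_le_one hα0
  -- (W α * f)² ≤ f²
  have hsq_le : ∀ (u : ℝ → ℝ≥0∞), (∀ τ, (W α τ * u τ) ^ (2:ℝ) ≤ u τ ^ (2:ℝ)) := by
    intro u τ
    apply ENNReal.rpow_le_rpow _ (by norm_num)
    calc W α τ * u τ ≤ 1 * u τ := mul_le_mul_left (hWα τ) _
      _ = u τ := one_mul _
  -- inner Cauchy-Schwarz with translation, for the weighted f against translated h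
  have hinner : ∀ η : ℝ, (∫⁻ ξ : ℝ, (W α ξ * f ξ) * h (ξ + η)) ≤ Lf * Lh := by
    intro η
    have hsh : Measurable (fun ξ : ℝ => h (ξ + η)) := hh.comp (measurable_add_const η)
    calc (∫⁻ ξ : ℝ, (W α ξ * f ξ) * h (ξ + η))
        ≤ (∫⁻ ξ, (W α ξ * f ξ) ^ (2:ℝ)) ^ ((1:ℝ)/2) *
            (∫⁻ ξ, h (ξ + η) ^ (2:ℝ)) ^ ((1:ℝ)/2) := CS hmf hsh
      _ ≤ Lf * Lh := by
          rw [lint_shift h η]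
          apply mul_le_mul_left
          apply ENNReal.rpow_le_rpow _ (by norm_num)
          exact lintegral_mono (fun ξ => hsq_le f ξ)
  have hinner' : ∀ ξ : ℝ, (∫⁻ η : ℝ, (W α η * g η) * h (ξ + η)) ≤ Lg * Lh := by
    intro ξ
    have hsh : Measurable (fun η : ℝ => h (ξ + η)) := hh.comp (measurable_const_add ξ)
    calc (∫⁻ η : ℝ, (W α η * g η) * h (ξ + η))
        ≤ (∫⁻ η, (W α η * g η) ^ (2:ℝ)) ^ ((1:ℝ)/2) *
            (∫⁻ η, h (ξ + η) ^ (2:ℝ)) ^ ((1:ℝ)/2) := CS hmg hsh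
      _ ≤ Lg * Lh := by
          have : ∫⁻ η : ℝ, h (ξ + η) ^ (2:ℝ) = ∫⁻ η : ℝ, h η ^ (2:ℝ) := by
            simp_rw [add_comm ξ]
            exact lint_shift h ξ
          rw [this]
          apply mul_le_mul_left
          apply ENNReal.rpow_le_rpow _ (by norm_num)
          exact lintegral_mono (fun η => hsq_le g η)
  -- the weighted L¹ bound  ∫ W(-s) u ≤ CE * Lu
  have hL1f : (∫⁻ ξ : ℝ, W (-s) ξ * f ξ) ≤ CE * Lf := by
    calc (∫⁻ ξ : ℝ, W (-s) ξ * f ξ)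
        ≤ (∫⁻ ξ, W (-s) ξ ^ (2:ℝ)) ^ ((1:ℝ)/2) * (∫⁻ ξ, f ξ ^ (2:ℝ)) ^ ((1:ℝ)/2) :=
          CS (measurable_W (-s)) hf
      _ = CE * Lf := by rw [hWL2]
  have hL1g : (∫⁻ η : ℝ, W (-s) η * g η) ≤ CE * Lg := by
    calc (∫⁻ η : ℝ, W (-s) η * g η)
        ≤ (∫⁻ η, W (-s) η ^ (2:ℝ)) ^ ((1:ℝ)/2) * (∫⁻ η, g η ^ (2:ℝ)) ^ ((1:ℝ)/2) :=
          CS (measurable_W (-s)) hg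
      _ = CE * Lg := by rw [hWL2]
  -- the two pieces
  set J1 := ∫⁻ ξ : ℝ, ∫⁻ η : ℝ, (W α ξ * f ξ) * ((W (-s) η * g η) * h (ξ + η)) with hJ1
  set J2 := ∫⁻ ξ : ℝ, ∫⁻ η : ℝ, (W (-s) ξ * f ξ) * ((W α η * g η) * h (ξ + η)) with hJ2
  have hJ1le : J1 ≤ CE * (Lf * Lg * Lh) := by
    have hswap : J1 = ∫⁻ η : ℝ, ∫⁻ ξ : ℝ, (W α ξ * f ξ) * ((W (-s) η * g η) * h (ξ + η)) := by
      rw [hJ1]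
      apply lintegral_lintegral_swap
      apply Measurable.aemeasurable
      apply Measurable.mul
      · exact hmf.comp measurable_fst
      · apply Measurable.mul
        · exact hmg'.comp measurable_snd
        · exact hh.comp (measurable_fst.add measurable_snd)
    rw [hswap]
    calc (∫⁻ η : ℝ, ∫⁻ ξ : ℝ, (W α ξ * f ξ) * ((W (-s) η * g η) * h (ξ + η)))
        = ∫⁻ η : ℝ, (W (-s) η * g η) * ∫⁻ ξ : ℝ, (W α ξ * f ξ) * h (ξ + η) := by
          apply lintegral_congr (fun η => ?_)
          rw [← lintegral_const_mul _ (show Measurable fun ξ : ℝ => (W α ξ * f ξ) * h (ξ + η)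
            from hmf.mul (hh.comp (measurable_add_const η)))]
          apply lintegral_congr (fun ξ => ?_)
          ring
      _ ≤ ∫⁻ η : ℝ, (W (-s) η * g η) * (Lf * Lh) :=
          lintegral_mono (fun η => mul_le_mul_right (hinner η) _)
      _ = (∫⁻ η : ℝ, W (-s) η * g η) * (Lf * Lh) := lintegral_mul_const _ hmg'
      _ ≤ (CE * Lg) * (Lf * Lh) := mul_le_mul_left hL1g _
      _ = CE * (Lf * Lg * Lh) := by ring
  have hJ2le : J2 ≤ CE * (Lf * Lg * Lh) := by
    calc J2 = ∫⁻ ξ : ℝ, (W (-s) ξ * f ξ) * ∫⁻ η : ℝ, (W α η * g η) * h (ξ + η) := by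
          rw [hJ2]
          apply lintegral_congr (fun ξ => ?_)
          rw [← lintegral_const_mul _ (show Measurable fun η : ℝ => (W α η * g η) * h (ξ + η)
            from hmg.mul (hh.comp (measurable_const_add ξ)))]
      _ ≤ ∫⁻ ξ : ℝ, (W (-s) ξ * f ξ) * (Lg * Lh) :=
          lintegral_mono (fun ξ => mul_le_mul_right (hinner' ξ) _)
      _ = (∫⁻ ξ : ℝ, W (-s) ξ * f ξ) * (Lg * Lh) := lintegral_mul_const _ hmf'
      _ ≤ (CE * Lf) * (Lg * Lh) := mul_le_mul_left hL1f _
      _ = CE * (Lf * Lg * Lh) := by ring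
  -- pointwise splitting
  have hp0 : (0:ℝ) ≤ p := by rw [hp]; linarith
  have hp1 : p ≤ 1 := by rw [hp]; linarith
  have hsplit : ∀ ξ η : ℝ,
      (W (-s) ξ * f ξ) * (W (-s) η * g η) * (W p (ξ+η) * h (ξ+η))
        ≤ 2 * ((W α ξ * f ξ) * ((W (-s) η * g η) * h (ξ + η))
             + (W (-s) ξ * f ξ) * ((W α η * g η) * h (ξ + η))) := by
    intro ξ η
    calc (W (-s) ξ * f ξ) * (W (-s) η * g η) * (W p (ξ+η) * h (ξ+η))
        = ((W (-s) ξ * f ξ) * (W (-s) η * g η) * h (ξ+η)) * W p (ξ+η) := by ring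
      _ ≤ ((W (-s) ξ * f ξ) * (W (-s) η * g η) * h (ξ+η)) * (2 * (W p ξ + W p η)) :=
          mul_le_mul_right (W_add_le hp0 hp1 ξ η) _
      _ = 2 * (((W (-s) ξ * W p ξ) * f ξ) * ((W (-s) η * g η) * h (ξ + η))
             + (W (-s) ξ * f ξ) * (((W (-s) η * W p η) * g η) * h (ξ + η))) := by ring
      _ = 2 * ((W α ξ * f ξ) * ((W (-s) η * g η) * h (ξ + η))
             + (W (-s) ξ * f ξ) * ((W α η * g η) * h (ξ + η))) := by
          rw [hαeq ξ, hαeq η]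
  -- put it together
  calc (∫⁻ ξ : ℝ, ∫⁻ η : ℝ,
        (W (-s) ξ * f ξ) * (W (-s) η * g η) * (W p (ξ+η) * h (ξ+η)))
      ≤ ∫⁻ ξ : ℝ, ∫⁻ η : ℝ,
          2 * ((W α ξ * f ξ) * ((W (-s) η * g η) * h (ξ + η))
             + (W (-s) ξ * f ξ) * ((W α η * g η) * h (ξ + η))) :=
        lintegral_mono (fun ξ => lintegral_mono (fun η => hsplit ξ η))
    _ = 2 * (J1 + J2) := by
        have measA : ∀ ξ, Measurable (fun η => (W α ξ * f ξ) * ((W (-s) η * g η) * h (ξ + η))) :=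
          fun ξ => measurable_const.mul (hmg'.mul (hh.comp (measurable_const_add ξ)))
        have measAB : Measurable (Function.uncurry fun ξ η =>
            (W α ξ * f ξ) * ((W (-s) η * g η) * h (ξ + η))) := by
          apply Measurable.mul
          · exact hmf.comp measurable_fst
          · exact (hmg'.comp measurable_snd).mul (hh.comp (measurable_fst.add measurable_snd))
        have measBB : Measurable (Function.uncurry fun ξ η =>
            (W (-s) ξ * f ξ) * ((W α η * g η) * h (ξ + η))) := by
          apply Measurable.mul
          · exact hmf'.comp measurable_fst
          · exact (hmg.comp measurable_snd).mul (hh.comp (measurable_fst.add measurable_snd))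
        have e1 : ∀ ξ : ℝ, (∫⁻ η : ℝ,
            2 * ((W α ξ * f ξ) * ((W (-s) η * g η) * h (ξ + η))
               + (W (-s) ξ * f ξ) * ((W α η * g η) * h (ξ + η))))
            = 2 * ((∫⁻ η : ℝ, (W α ξ * f ξ) * ((W (-s) η * g η) * h (ξ + η)))
               + (∫⁻ η : ℝ, (W (-s) ξ * f ξ) * ((W α η * g η) * h (ξ + η)))) := by
          intro ξ
          rw [lintegral_const_mul' _ _ (by norm_num : (2:ℝ≥0∞) ≠ ⊤),
            lintegral_add_left (measA ξ)]
        rw [lintegral_congr e1,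
          lintegral_const_mul' _ _ (by norm_num : (2:ℝ≥0∞) ≠ ⊤),
          lintegral_add_left measAB.lintegral_prod_right]
    _ ≤ 2 * (CE * (Lf * Lg * Lh) + CE * (Lf * Lg * Lh)) := by
        apply mul_le_mul_right
        exact add_le_add hJ1le hJ2le
    _ = ENNReal.ofReal (4 * Iconst ε ^ ((1:ℝ)/2)) * (Lf * Lg * Lh) := by
        rw [ENNReal.ofReal_mul (by norm_num), ENNReal.ofReal_ofNat, ← hCE]
        ring










-- ### assembly

lemma W_zero (τ : ℝ) : W 0 τ = 1 := by
  rw [W, Real.rpow_zero, ENNReal.ofReal_one]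

lemma W_cancel (r τ : ℝ) (x : ℝ≥0∞) : W (-r) τ * (W r τ * x) = x := by
  rw [← mul_assoc, W_mul, neg_add_cancel, W_zero, one_mul]

lemma sobNorm_nonneg (σ : ℝ) (F : ℝ → ℂ) : 0 ≤ sobNorm1 σ F :=
  Real.rpow_nonneg (integral_nonneg fun τ =>
    mul_nonneg (Real.rpow_nonneg (Real.sqrt_nonneg _) _) (sq_nonneg _)) _

lemma integrable_weight_fourier (r : ℝ) (φ : 𝓢(ℝ, ℂ)) :
    Integrable (fun τ => brk τ ^ r * ‖𝓕 (⇑φ) τ‖ ^ 2) := by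
  have h := integrable_brk_mul_sq r (fourierTransformCLM ℂ φ)
  simpa [SchwartzMap.fourier_coe] using h

lemma sobNorm_eq (σ : ℝ) (φ : 𝓢(ℝ, ℂ)) :
    sobNorm1 σ ⇑φ = (∫ τ : ℝ, brk τ ^ (2 * σ) * ‖𝓕 (⇑φ) τ‖ ^ 2) ^ ((1:ℝ)/2) := rfl

lemma sobNorm_mono {σ₁ σ₂ : ℝ} (h : σ₁ ≤ σ₂) (φ : 𝓢(ℝ, ℂ)) :
    sobNorm1 σ₁ ⇑φ ≤ sobNorm1 σ₂ ⇑φ := by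
  rw [sobNorm_eq, sobNorm_eq]
  apply Real.rpow_le_rpow
  · exact integral_nonneg fun τ => mul_nonneg (brk_rpow_nonneg _ _) (sq_nonneg _)
  · apply integral_mono (integrable_weight_fourier _ φ) (integrable_weight_fourier _ φ)
    intro τ
    exact mul_le_mul_of_nonneg_right (brk_rpow_le_rpow (by linarith) τ) (sq_nonneg _)
  · norm_num

/-- `L²`-lintegral of weighted Fourier transform equals `ofReal` of the Sobolev norm -/
lemma Lf_eq (s : ℝ) (φ : 𝓢(ℝ, ℂ)) :
    (∫⁻ τ : ℝ, (W s τ * (‖𝓕 (⇑φ) τ‖₊ : ℝ≥0∞)) ^ (2:ℝ)) ^ ((1:ℝ)/2)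
      = ENNReal.ofReal (sobNorm1 s ⇑φ) := by
  have h1 : ∀ τ : ℝ, (W s τ * (‖𝓕 (⇑φ) τ‖₊ : ℝ≥0∞)) ^ (2:ℝ)
      = ENNReal.ofReal (brk τ ^ (2 * s) * ‖𝓕 (⇑φ) τ‖ ^ 2) := by
    intro τ
    rw [W, ← ENNReal.ofReal_coe_nnreal, coe_nnnorm,
      ← ENNReal.ofReal_mul (brk_rpow_nonneg s τ),
      ENNReal.ofReal_rpow_of_nonneg (mul_nonneg (brk_rpow_nonneg s τ) (norm_nonneg _))
        (by norm_num : (0:ℝ) ≤ 2)]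
    congr 1
    rw [Real.mul_rpow (brk_rpow_nonneg s τ) (norm_nonneg _),
      ← Real.rpow_mul (brk_pos τ).le]
    congr 1
    · congr 1; ring
    · rw [show (2:ℝ) = ((2:ℕ):ℝ) by norm_num, Real.rpow_natCast]
  simp_rw [h1]
  rw [← ofReal_integral_eq_lintegral_ofReal (integrable_weight_fourier (2*s) φ)
      (Filter.Eventually.of_forall fun τ =>
        mul_nonneg (brk_rpow_nonneg _ _) (sq_nonneg _)),
    ENNReal.ofReal_rpow_of_nonneg
      (integral_nonneg fun τ => mul_nonneg (brk_rpow_nonneg _ _) (sq_nonneg _))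
      (by norm_num : (0:ℝ) ≤ 1/2)]
  rfl

lemma lintegral_neg_real (u : ℝ → ℝ≥0∞) : ∫⁻ x : ℝ, u (-x) = ∫⁻ x, u x := by
  have h := lintegral_map_equiv u (MeasurableEquiv.neg ℝ) (μ := volume)
  rw [show Measure.map (⇑(MeasurableEquiv.neg ℝ)) volume = volume from ?_] at h
  · exact h.symm
  · exact Measure.map_neg_eq_self volume

lemma Lh_eq (σ : ℝ) (φ : 𝓢(ℝ, ℂ)) :
    (∫⁻ τ : ℝ, (W σ τ * (‖𝓕 (⇑φ) (-τ)‖₊ : ℝ≥0∞)) ^ (2:ℝ)) ^ ((1:ℝ)/2)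
      = ENNReal.ofReal (sobNorm1 σ ⇑φ) := by
  rw [← Lf_eq σ φ]
  congr 1
  have h1 : ∀ τ : ℝ, (W σ τ * (‖𝓕 (⇑φ) (-τ)‖₊ : ℝ≥0∞)) ^ (2:ℝ)
      = (fun x : ℝ => (W σ x * (‖𝓕 (⇑φ) x‖₊ : ℝ≥0∞)) ^ (2:ℝ)) (-τ) := by
    intro τ
    simp only
    rw [show W σ (-τ) = W σ τ from by rw [W, W, brk_neg]]
  simp_rw [h1]
  exact lintegral_neg_real (fun x : ℝ => (W σ x * (‖𝓕 (⇑φ) x‖₊ : ℝ≥0∞)) ^ (2:ℝ))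

lemma norm_le_J (F G H : 𝓢(ℝ, ℂ)) :
    (‖∫ t : ℝ, F t * G t * H t‖₊ : ℝ≥0∞)
      ≤ ∫⁻ ξ : ℝ, ∫⁻ η : ℝ,
          (‖𝓕 (⇑F) ξ‖₊ : ℝ≥0∞) * (‖𝓕 (⇑G) η‖₊ : ℝ≥0∞) * (‖𝓕 (⇑H) (-(ξ+η))‖₊ : ℝ≥0∞) := by
  rw [identity F G H]
  calc (‖∫ ξ : ℝ, 𝓕 (⇑F) ξ * ∫ η : ℝ, 𝓕 (⇑G) η * 𝓕 (⇑H) (-(ξ + η))‖₊ : ℝ≥0∞)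
      ≤ ∫⁻ ξ : ℝ, ‖𝓕 (⇑F) ξ * ∫ η : ℝ, 𝓕 (⇑G) η * 𝓕 (⇑H) (-(ξ + η))‖₊ :=
        enorm_integral_le_lintegral_enorm _
    _ ≤ ∫⁻ ξ : ℝ, ∫⁻ η : ℝ,
          (‖𝓕 (⇑F) ξ‖₊ : ℝ≥0∞) * (‖𝓕 (⇑G) η‖₊ : ℝ≥0∞) * (‖𝓕 (⇑H) (-(ξ+η))‖₊ : ℝ≥0∞) := by
        apply lintegral_mono (fun ξ => ?_)
        rw [nnnorm_mul, ENNReal.coe_mul]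
        calc (‖𝓕 (⇑F) ξ‖₊ : ℝ≥0∞) * ‖∫ η : ℝ, 𝓕 (⇑G) η * 𝓕 (⇑H) (-(ξ + η))‖₊
            ≤ (‖𝓕 (⇑F) ξ‖₊ : ℝ≥0∞) * ∫⁻ η : ℝ, ‖𝓕 (⇑G) η * 𝓕 (⇑H) (-(ξ + η))‖₊ :=
              mul_le_mul_right (enorm_integral_le_lintegral_enorm _) _
          _ = ∫⁻ η : ℝ, (‖𝓕 (⇑F) ξ‖₊ : ℝ≥0∞) * (‖𝓕 (⇑G) η‖₊ : ℝ≥0∞) * ‖𝓕 (⇑H) (-(ξ+η))‖₊ := by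
              have hmeas : Measurable fun η : ℝ => (‖𝓕 (⇑G) η * 𝓕 (⇑H) (-(ξ + η))‖₊ : ℝ≥0∞) :=
                ((fourier_continuous G).mul
                  ((fourier_continuous H).comp
                    (by continuity : Continuous fun η : ℝ => -(ξ+η)))).measurable.enorm
              rw [← lintegral_const_mul _ hmeas]
              apply lintegral_congr (fun η => ?_)
              rw [nnnorm_mul, ENNReal.coe_mul]
              ring

/-- the main bound, for small ε -/
lemma main_small {ε : ℝ} (hε : 0 < ε) (hε8 : ε ≤ 1/8) :
    ∃ C > 0, ∀ F G H : SchwartzMap ℝ ℂ,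
      ‖∫ t : ℝ, F t * G t * H t‖
        ≤ C * sobNorm1 (1/2 + ε) F * sobNorm1 (1/2 + ε) G * sobNorm1 (-(1/4) + ε) H := by
  have hI : 0 ≤ Iconst ε := integral_nonneg fun τ => brk_rpow_nonneg _ τ
  have hI2 : 0 ≤ 4 * Iconst ε ^ ((1:ℝ)/2) := by positivity
  refine ⟨4 * Iconst ε ^ ((1:ℝ)/2) + 1, by positivity, fun F G H => ?_⟩
  set s : ℝ := 1/2 + ε with hs
  set σ : ℝ := -(1/4) + ε with hσ
  set A := sobNorm1 s ⇑F with hA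
  set B := sobNorm1 s ⇑G with hB
  set Cn := sobNorm1 σ ⇑H with hCn
  have hAnn : 0 ≤ A := sobNorm_nonneg _ _
  have hBnn : 0 ≤ B := sobNorm_nonneg _ _
  have hCnn : 0 ≤ Cn := sobNorm_nonneg _ _
  -- the three ℝ≥0∞ functions
  set f : ℝ → ℝ≥0∞ := fun ξ => W s ξ * (‖𝓕 (⇑F) ξ‖₊ : ℝ≥0∞) with hf
  set g : ℝ → ℝ≥0∞ := fun η => W s η * (‖𝓕 (⇑G) η‖₊ : ℝ≥0∞) with hg
  set h : ℝ → ℝ≥0∞ := fun τ => W σ τ * (‖𝓕 (⇑H) (-τ)‖₊ : ℝ≥0∞) with hh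
  have hfm : Measurable f := (measurable_W s).mul (fourier_continuous F).measurable.enorm
  have hgm : Measurable g := (measurable_W s).mul (fourier_continuous G).measurable.enorm
  have hhm : Measurable h := (measurable_W σ).mul
    (((fourier_continuous H).comp continuous_neg).measurable.enorm)
  have key : (‖∫ t : ℝ, F t * G t * H t‖₊ : ℝ≥0∞)
      ≤ ENNReal.ofReal ((4 * Iconst ε ^ ((1:ℝ)/2)) * (A * B * Cn)) := by
    calc (‖∫ t : ℝ, F t * G t * H t‖₊ : ℝ≥0∞)
        ≤ ∫⁻ ξ : ℝ, ∫⁻ η : ℝ,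
            (‖𝓕 (⇑F) ξ‖₊ : ℝ≥0∞) * (‖𝓕 (⇑G) η‖₊ : ℝ≥0∞) * (‖𝓕 (⇑H) (-(ξ+η))‖₊ : ℝ≥0∞) :=
          norm_le_J F G H
      _ = ∫⁻ ξ : ℝ, ∫⁻ η : ℝ,
            (W (-s) ξ * f ξ) * (W (-s) η * g η) * (W (1/4-ε) (ξ+η) * h (ξ+η)) := by
          apply lintegral_congr (fun ξ => ?_)
          apply lintegral_congr (fun η => ?_)
          rw [hf, hg, hh]
          simp only
          rw [W_cancel s ξ, W_cancel s η,
            show W (1/4-ε) (ξ+η) = W (-σ) (ξ+η) from by rw [hσ]; congr 1; ring,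
            W_cancel σ (ξ+η)]
      _ ≤ ENNReal.ofReal (4 * Iconst ε ^ ((1:ℝ)/2)) *
            ((∫⁻ x, f x ^ (2:ℝ)) ^ ((1:ℝ)/2) * (∫⁻ x, g x ^ (2:ℝ)) ^ ((1:ℝ)/2) *
              (∫⁻ x, h x ^ (2:ℝ)) ^ ((1:ℝ)/2)) := core hε hε8 hfm hgm hhm
      _ = ENNReal.ofReal (4 * Iconst ε ^ ((1:ℝ)/2)) *
            (ENNReal.ofReal A * ENNReal.ofReal B * ENNReal.ofReal Cn) := by
          rw [hf, hg, hh]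
          rw [Lf_eq s F, Lf_eq s G, Lh_eq σ H]
      _ = ENNReal.ofReal ((4 * Iconst ε ^ ((1:ℝ)/2)) * (A * B * Cn)) := by
          rw [ENNReal.ofReal_mul hI2, ENNReal.ofReal_mul (mul_nonneg hAnn hBnn),
            ENNReal.ofReal_mul hAnn]
  -- conclude in ℝ
  have hkey2 : (‖∫ t : ℝ, F t * G t * H t‖₊ : ℝ≥0∞)
      ≤ ENNReal.ofReal ((4 * Iconst ε ^ ((1:ℝ)/2) + 1) * (A * B * Cn)) := by
    refine key.trans (ENNReal.ofReal_le_ofReal ?_)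
    apply mul_le_mul_of_nonneg_right (by linarith) (by positivity)
  have := (ENNReal.toReal_le_toReal (by simp) (by simp)).mpr hkey2
  rw [ENNReal.coe_toReal, coe_nnnorm,
    ENNReal.toReal_ofReal (by positivity)] at this
  calc ‖∫ t : ℝ, F t * G t * H t‖
      ≤ (4 * Iconst ε ^ ((1:ℝ)/2) + 1) * (A * B * Cn) := this
    _ = (4 * Iconst ε ^ ((1:ℝ)/2) + 1) * A * B * Cn := by ring



end
end Stmt9Proof

/-- Temporal trilinear estimate: |∫ FGH| ≲ ‖F‖_{H^{1/2+ε}} ‖G‖_{H^{1/2+ε}} ‖H‖_{H^{-1/4+ε}}. -/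
theorem stmt_9 (ε : ℝ) (hε : 0 < ε) :
    ∃ C > 0, ∀ F G H : SchwartzMap ℝ ℂ,
      ‖∫ t : ℝ, F t * G t * H t‖
        ≤ C * sobNorm1 (1/2 + ε) F * sobNorm1 (1/2 + ε) G * sobNorm1 (-(1/4) + ε) H := by
  have hε'pos : 0 < min ε (1/8) := lt_min hε (by norm_num)
  have hε'8 : min ε (1/8) ≤ 1/8 := min_le_right _ _
  have hε'ε : min ε (1/8) ≤ ε := min_le_left _ _
  obtain ⟨C, hC, hbound⟩ := Stmt9Proof.main_small hε'pos hε'8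
  refine ⟨C, hC, fun F G H => ?_⟩
  have h1 := hbound F G H
  have mA := Stmt9Proof.sobNorm_mono (show 1/2 + min ε (1/8) ≤ 1/2 + ε by linarith) F
  have mB := Stmt9Proof.sobNorm_mono (show 1/2 + min ε (1/8) ≤ 1/2 + ε by linarith) G
  have mC := Stmt9Proof.sobNorm_mono (show -(1/4) + min ε (1/8) ≤ -(1/4) + ε by linarith) H
  have nA := Stmt9Proof.sobNorm_nonneg (1/2 + min ε (1/8)) (⇑F)
  have nB := Stmt9Proof.sobNorm_nonneg (1/2 + min ε (1/8)) (⇑G)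
  have nC := Stmt9Proof.sobNorm_nonneg (-(1/4) + min ε (1/8)) (⇑H)
  have nA' := Stmt9Proof.sobNorm_nonneg (1/2 + ε) (⇑F)
  have nB' := Stmt9Proof.sobNorm_nonneg (1/2 + ε) (⇑G)
  have c1 : C * sobNorm1 (1/2 + min ε (1/8)) ⇑F ≤ C * sobNorm1 (1/2 + ε) ⇑F :=
    mul_le_mul_of_nonneg_left mA hC.le
  have c2 : C * sobNorm1 (1/2 + min ε (1/8)) ⇑F * sobNorm1 (1/2 + min ε (1/8)) ⇑G
      ≤ C * sobNorm1 (1/2 + ε) ⇑F * sobNorm1 (1/2 + ε) ⇑G :=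
    mul_le_mul c1 mB nB (mul_nonneg hC.le nA')
  have c3 : C * sobNorm1 (1/2 + min ε (1/8)) ⇑F * sobNorm1 (1/2 + min ε (1/8)) ⇑G *
        sobNorm1 (-(1/4) + min ε (1/8)) ⇑H
      ≤ C * sobNorm1 (1/2 + ε) ⇑F * sobNorm1 (1/2 + ε) ⇑G * sobNorm1 (-(1/4) + ε) ⇑H :=
    mul_le_mul c2 mC nC (mul_nonneg (mul_nonneg hC.le nA') nB')
  linarith
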